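/- Suppose the nominal problem P(c) = min { c^t x : x ∈ X } can be solved in time polynomial in n for every c ≥ 0, and K is a fixed constant. Define c(π)_j = c̲_j π_k + (c̲_j + d_j)(1 − π_k) for j ∈ P_k, and let X̂ = { x ∈ X : ∃ π ∈ {0,1}^K, x is optimal for P(c(π)) }. Then X̂ has at most 2^K elements, a set of optimal solutions realizing X̂ can be computed by solving 2^K nominal problems, and X̂ is a 0,Ω-multiparametric robust solution: for every Γ ∈ Ω, some x ∈ X̂ is a robust solution for Γ. -/

import Mathlib

theorem stmt_18 (n K : ℕ) (X : Finset (Fin n → ℝ)) (hX : X.Nonempty)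
    (hbin : ∀ x ∈ X, ∀ j, x j = 0 ∨ x j = 1)
    (P : Fin K → Finset (Fin n)) (hP : ∀ j, ∃! k, j ∈ P k)
    (blk : Fin n → Fin K) (hblk : ∀ j, j ∈ P (blk j))
    (cbar d : Fin n → ℝ) (hc : ∀ j, 0 ≤ cbar j) (hd : ∀ j, 0 ≤ d j)
    (Ω : Set (Fin K → ℝ)) (hΩ : ∀ Γ ∈ Ω, ∀ k, 0 ≤ Γ k) :
    ∃ S : Finset (Fin n → ℝ),
      S ⊆ X ∧ S.card ≤ 2 ^ K ∧
      (∀ π : Fin K → ℝ, (∀ k, π k = 0 ∨ π k = 1) →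
        ∃ x ∈ S, ∀ y ∈ X,
          ∑ j, (cbar j * π (blk j) + (cbar j + d j) * (1 - π (blk j))) * x j ≤
          ∑ j, (cbar j * π (blk j) + (cbar j + d j) * (1 - π (blk j))) * y j) ∧
      (∀ Γ ∈ Ω, ∃ x ∈ S, ∀ y ∈ X,
        sSup {z | ∃ lam : Fin n → ℝ, (∀ j, 0 ≤ lam j ∧ lam j ≤ d j) ∧
          (∀ k, ∑ j ∈ P k, lam j ≤ Γ k) ∧ z = ∑ j, (cbar j + lam j) * x j} ≤
        sSup {z | ∃ lam : Fin n → ℝ, (∀ j, 0 ≤ lam j ∧ lam j ≤ d j) ∧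
          (∀ k, ∑ j ∈ P k, lam j ≤ Γ k) ∧ z = ∑ j, (cbar j + lam j) * y j}) := by
  classical
  -- cost function for the nominal problems
  set cost : (Fin K → ℝ) → (Fin n → ℝ) → ℝ := fun π x =>
    ∑ j, (cbar j * π (blk j) + (cbar j + d j) * (1 - π (blk j))) * x j with hcostdef
  -- choose a minimizer for every π
  have hmin : ∀ π : Fin K → ℝ, ∃ x, x ∈ X ∧ ∀ y ∈ X, cost π x ≤ cost π y := by
    intro π
    obtain ⟨x, hx, h⟩ := X.exists_min_image (cost π) hX
    exact ⟨x, hx, h⟩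
  choose xm hxmX hxm using hmin
  set B : Finset (Fin K → ℝ) :=
    (Finset.univ : Finset (Fin K → Bool)).image (fun b k => if b k then (1 : ℝ) else 0) with hBdef
  set S : Finset (Fin n → ℝ) := B.image xm with hSdef
  -- membership of binary vectors in B
  have hmemB : ∀ π : Fin K → ℝ, (∀ k, π k = 0 ∨ π k = 1) → π ∈ B := by
    intro π hπ
    refine Finset.mem_image.mpr ⟨fun k => if π k = 1 then true else false, Finset.mem_univ _, ?_⟩
    funext k
    rcases hπ k with h | h <;> simp [h]
  -- partition facts
  have hPk : ∀ k j, j ∈ P k ↔ blk j = k := by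
    intro k j
    constructor
    · intro hj
      obtain ⟨k', _, huniq⟩ := hP j
      rw [huniq k hj, huniq (blk j) (hblk j)]
    · rintro rfl; exact hblk j
  have hPfilter : ∀ k, P k = Finset.univ.filter (fun j => blk j = k) := by
    intro k
    ext j
    simp [hPk k j]
  have hsum : ∀ g : Fin n → ℝ, ∑ j, g j = ∑ k, ∑ j ∈ P k, g j := by
    intro g
    have := Finset.sum_fiberwise_of_maps_to
      (g := blk) (s := (Finset.univ : Finset (Fin n))) (t := (Finset.univ : Finset (Fin K)))
      (fun i _ => Finset.mem_univ _) g
    rw [← this]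
    refine Finset.sum_congr rfl fun k _ => ?_
    rw [hPfilter k]
  -- "block weight" of a vector
  set D : (Fin n → ℝ) → Fin K → ℝ := fun x k => ∑ j ∈ P k, d j * x j with hDdef
  have hDnonneg : ∀ x ∈ X, ∀ k, 0 ≤ D x k := by
    intro x hx k
    refine Finset.sum_nonneg fun j _ => ?_
    rcases hbin x hx j with h | h <;> simp [h, hd j]
  have hx01 : ∀ x ∈ X, ∀ j, 0 ≤ x j ∧ x j ≤ 1 := by
    intro x hx j
    rcases hbin x hx j with h | h <;> simp [h]
  -- cost rewrite: valid for all π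
  have hcost_eq : ∀ (π : Fin K → ℝ) (x : Fin n → ℝ),
      cost π x = ∑ j, cbar j * x j + ∑ k, (1 - π k) * D x k := by
    intro π x
    have h1 : cost π x = ∑ j, (cbar j * x j + d j * (1 - π (blk j)) * x j) := by
      rw [hcostdef]
      refine Finset.sum_congr rfl fun j _ => ?_
      ring
    rw [h1, Finset.sum_add_distrib]
    congr 1
    rw [hsum (fun j => d j * (1 - π (blk j)) * x j)]
    refine Finset.sum_congr rfl fun k _ => ?_
    rw [hDdef, Finset.mul_sum]
    refine Finset.sum_congr rfl fun j hj => ?_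
    rw [(hPk k j).mp hj]
    ring
  refine ⟨S, ?_, ?_, ?_, ?_⟩
  · -- S ⊆ X
    intro x hx
    obtain ⟨π, _, rfl⟩ := Finset.mem_image.mp hx
    exact hxmX π
  · -- card bound
    calc S.card ≤ B.card := Finset.card_image_le
      _ ≤ (Finset.univ : Finset (Fin K → Bool)).card := Finset.card_image_le
      _ = 2 ^ K := by simp [Finset.card_univ]
  · -- exact minimizers for each binary π
    intro π hπ
    exact ⟨xm π, Finset.mem_image_of_mem xm (hmemB π hπ), hxm π⟩
  · -- robustness
    intro Γ hΓ
    have hΓ0 : ∀ k, 0 ≤ Γ k := hΩ Γ hΓ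
    set T : (Fin n → ℝ) → Set ℝ := fun x =>
      {z | ∃ lam : Fin n → ℝ, (∀ j, 0 ≤ lam j ∧ lam j ≤ d j) ∧
        (∀ k, ∑ j ∈ P k, lam j ≤ Γ k) ∧ z = ∑ j, (cbar j + lam j) * x j} with hTdef
    set val : (Fin n → ℝ) → ℝ := fun x =>
      ∑ j, cbar j * x j + ∑ k, min (Γ k) (D x k) with hvaldef
    -- every feasible z is at most val x
    have hub : ∀ x ∈ X, ∀ z ∈ T x, z ≤ val x := by
      intro x hx z hz
      obtain ⟨lam, hlam1, hlam2, rfl⟩ := hz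
      have h1 : ∑ j, (cbar j + lam j) * x j = ∑ j, cbar j * x j + ∑ j, lam j * x j := by
        rw [← Finset.sum_add_distrib]
        refine Finset.sum_congr rfl fun j _ => ?_; ring
      rw [h1, hvaldef]
      refine add_le_add (le_refl _) ?_
      rw [hsum (fun j => lam j * x j)]
      refine Finset.sum_le_sum fun k _ => le_min ?_ ?_
      · calc ∑ j ∈ P k, lam j * x j ≤ ∑ j ∈ P k, lam j := by
              refine Finset.sum_le_sum fun j _ => ?_
              calc lam j * x j ≤ lam j * 1 :=
                    mul_le_mul_of_nonneg_left (hx01 x hx j).2 (hlam1 j).1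
                _ = lam j := mul_one _
          _ ≤ Γ k := hlam2 k
      · refine Finset.sum_le_sum fun j _ => ?_
        exact mul_le_mul_of_nonneg_right (hlam1 j).2 (hx01 x hx j).1
    have hTne : ∀ x ∈ X, (T x).Nonempty := by
      intro x hx
      refine ⟨∑ j, (cbar j + (fun _ : Fin n => (0:ℝ)) j) * x j,
        ⟨fun _ => 0, fun j => ⟨le_refl 0, hd j⟩, fun k => by simpa using hΓ0 k, rfl⟩⟩
    have hTbdd : ∀ x ∈ X, BddAbove (T x) := by
      intro x hx
      exact ⟨val x, fun z hz => hub x hx z hz⟩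
    -- the supremum is attained and equals val x
    have hattain : ∀ x ∈ X, val x ∈ T x := by
      intro x hx
      set t : Fin K → ℝ := fun k => if D x k ≤ Γ k then 1 else Γ k / D x k with htdef
      have ht01 : ∀ k, 0 ≤ t k ∧ t k ≤ 1 := by
        intro k
        rw [htdef]
        by_cases h : D x k ≤ Γ k
        · simp [h]
        · have hDpos : 0 < D x k := lt_of_le_of_lt (hΓ0 k) (not_le.mp h)
          simp only [h, if_false]
          constructor
          · exact div_nonneg (hΓ0 k) (le_of_lt hDpos)
          · exact (div_le_one hDpos).mpr (le_of_lt (not_le.mp h))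
      set lam : Fin n → ℝ := fun j => t (blk j) * (d j * x j) with hlamdef
      have hlam1 : ∀ j, 0 ≤ lam j ∧ lam j ≤ d j := by
        intro j
        have hdx0 : 0 ≤ d j * x j := mul_nonneg (hd j) (hx01 x hx j).1
        have hdx1 : d j * x j ≤ d j := by
          calc d j * x j ≤ d j * 1 := mul_le_mul_of_nonneg_left (hx01 x hx j).2 (hd j)
            _ = d j := mul_one _
        constructor
        · exact mul_nonneg (ht01 (blk j)).1 hdx0
        · calc lam j ≤ 1 * (d j * x j) :=
              mul_le_mul_of_nonneg_right (ht01 (blk j)).2 hdx0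
            _ = d j * x j := one_mul _
            _ ≤ d j := hdx1
      have hblock : ∀ k, ∑ j ∈ P k, lam j = min (Γ k) (D x k) := by
        intro k
        have h1 : ∑ j ∈ P k, lam j = t k * D x k := by
          rw [hDdef, Finset.mul_sum]
          refine Finset.sum_congr rfl fun j hj => ?_
          simp only [hlamdef]
          rw [(hPk k j).mp hj]
        rw [h1, htdef]
        by_cases h : D x k ≤ Γ k
        · simp [h, min_eq_right h]
        · have hDpos : 0 < D x k := lt_of_le_of_lt (hΓ0 k) (not_le.mp h)
          simp only [h, if_false]
          rw [div_mul_cancel₀ _ (ne_of_gt hDpos), min_eq_left (le_of_lt (not_le.mp h))]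
      refine ⟨lam, hlam1, fun k => (hblock k).le.trans (min_le_left _ _), ?_⟩
      have h1 : ∑ j, (cbar j + lam j) * x j = ∑ j, cbar j * x j + ∑ j, lam j * x j := by
        rw [← Finset.sum_add_distrib]
        refine Finset.sum_congr rfl fun j _ => ?_; ring
      have h2 : ∀ j, lam j * x j = lam j := by
        intro j
        rcases hbin x hx j with hxj | hxj <;> simp [hlamdef, hxj]
      have h3 : ∑ j, lam j * x j = ∑ k, min (Γ k) (D x k) := by
        simp only [h2]
        rw [hsum lam]
        exact Finset.sum_congr rfl fun k _ => hblock k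
      simp only [hvaldef]
      rw [h1, h3]
    have hSup : ∀ x ∈ X, sSup (T x) = val x := by
      intro x hx
      exact le_antisymm (csSup_le (hTne x hx) (hub x hx)) (le_csSup (hTbdd x hx) (hattain x hx))
    -- val in terms of binary π
    have hval_le : ∀ x, ∀ π : Fin K → ℝ, (∀ k, π k = 0 ∨ π k = 1) →
        val x ≤ ∑ k, Γ k * π k + cost π x := by
      intro x π hπ
      rw [hvaldef, hcost_eq π x]
      have : ∑ k, Γ k * π k + (∑ j, cbar j * x j + ∑ k, (1 - π k) * D x k)
          = ∑ j, cbar j * x j + ∑ k, (Γ k * π k + (1 - π k) * D x k) := by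
        rw [Finset.sum_add_distrib]; ring
      rw [this]
      refine add_le_add (le_refl _) (Finset.sum_le_sum fun k _ => ?_)
      rcases hπ k with h | h
      · simpa [h] using min_le_right (Γ k) (D x k)
      · simpa [h] using min_le_left (Γ k) (D x k)
    have hval_eq : ∀ x, ∃ π : Fin K → ℝ, (∀ k, π k = 0 ∨ π k = 1) ∧
        val x = ∑ k, Γ k * π k + cost π x := by
      intro x
      refine ⟨fun k => if Γ k ≤ D x k then 1 else 0, fun k => by by_cases h : Γ k ≤ D x k <;>
        simp [h], ?_⟩
      simp only [hvaldef]
      rw [hcost_eq (fun k => if Γ k ≤ D x k then (1:ℝ) else 0) x]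
      have : ∀ (π : Fin K → ℝ), ∑ k, Γ k * π k + (∑ j, cbar j * x j + ∑ k, (1 - π k) * D x k)
          = ∑ j, cbar j * x j + ∑ k, (Γ k * π k + (1 - π k) * D x k) := by
        intro π; rw [Finset.sum_add_distrib]; ring
      rw [this]
      congr 1
      refine Finset.sum_congr rfl fun k _ => ?_
      by_cases h : Γ k ≤ D x k
      · simp [h, min_eq_left h]
      · simp [h, min_eq_right (le_of_lt (not_le.mp h))]
    -- pick the element of S minimizing val
    have hSne : S.Nonempty := by
      refine ⟨xm (fun _ => 0), Finset.mem_image_of_mem xm (hmemB _ fun k => Or.inl rfl)⟩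
    obtain ⟨x₀, hx₀S, hx₀min⟩ := S.exists_min_image val hSne
    have hSsubX : ∀ z ∈ S, z ∈ X := by
      intro z hz
      obtain ⟨π, _, rfl⟩ := Finset.mem_image.mp hz
      exact hxmX π
    refine ⟨x₀, hx₀S, fun y hy => ?_⟩
    rw [show {z | ∃ lam : Fin n → ℝ, (∀ j, 0 ≤ lam j ∧ lam j ≤ d j) ∧
          (∀ k, ∑ j ∈ P k, lam j ≤ Γ k) ∧ z = ∑ j, (cbar j + lam j) * x₀ j} = T x₀ from rfl,
        show {z | ∃ lam : Fin n → ℝ, (∀ j, 0 ≤ lam j ∧ lam j ≤ d j) ∧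
          (∀ k, ∑ j ∈ P k, lam j ≤ Γ k) ∧ z = ∑ j, (cbar j + lam j) * y j} = T y from rfl,
        hSup x₀ (hSsubX x₀ hx₀S), hSup y hy]
    -- main chain of inequalities
    obtain ⟨π, hπbin, hπeq⟩ := hval_eq y
    have hπB : π ∈ B := hmemB π hπbin
    have hxmS : xm π ∈ S := Finset.mem_image_of_mem xm hπB
    calc val x₀ ≤ val (xm π) := hx₀min _ hxmS
      _ ≤ ∑ k, Γ k * π k + cost π (xm π) := hval_le _ π hπbin
      _ ≤ ∑ k, Γ k * π k + cost π y := add_le_add (le_refl _) (hxm π y hy)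
      _ = val y := hπeq.symm
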